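/- Let T'_n be the tree obtained from three stars K_{1,k−1}, K_{1,a−1}, K_{1,b−1} with centers x, u, v respectively (with a, b ≥ 2 and (k) + a + b = n) by adding the edges xu and xv. If n ≥ k + 4, then κ^1(T'_n) = k. -/
import Mathlib


open SimpleGraph

/-- `F` is a g-good-neighbor cut of `G`: removing `F` disconnects `G`
and every vertex outside `F` has at least `g` neighbors outside `F`. -/
def IsGNCut {V : Type*} [Fintype V] (G : SimpleGraph V) (g : ℕ) (F : Finset V) : Prop :=
  ¬ (G.induce ((↑F : Set V)ᶜ)).Preconnected ∧
    ∀ v : V, v ∉ F → g ≤ (G.neighborSet v \ (↑F : Set V)).ncard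

/-- The g-good-neighbor connectivity `κ^g(G)`: minimum size of a g-good-neighbor cut. -/
noncomputable def gnConn {V : Type*} [Fintype V] (G : SimpleGraph V) (g : ℕ) : ℕ :=
  sInf {m | ∃ F : Finset V, IsGNCut G g F ∧ F.card = m}

/-- Classical vertex connectivity (as minimum size of a vertex cut). -/
noncomputable def vConn {V : Type*} [Fintype V] (G : SimpleGraph V) : ℕ :=
  sInf {m | ∃ F : Finset V, ¬ (G.induce ((↑F : Set V)ᶜ)).Preconnected ∧ F.card = m}

/-- T'_n: three stars on Fin k, Fin a, Fin b with centers the index-0 vertices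
x, u, v, plus edges xu and xv. -/
def Tprime (k a b : ℕ) : SimpleGraph (Fin k ⊕ Fin a ⊕ Fin b) :=
  SimpleGraph.fromRel (fun x y =>
    match x, y with
    | Sum.inl i, Sum.inl j => (i : ℕ) = 0 ∧ (j : ℕ) ≠ 0
    | Sum.inr (Sum.inl i), Sum.inr (Sum.inl j) => (i : ℕ) = 0 ∧ (j : ℕ) ≠ 0
    | Sum.inr (Sum.inr i), Sum.inr (Sum.inr j) => (i : ℕ) = 0 ∧ (j : ℕ) ≠ 0
    | Sum.inl i, Sum.inr (Sum.inl j) => (i : ℕ) = 0 ∧ (j : ℕ) = 0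
    | Sum.inl i, Sum.inr (Sum.inr j) => (i : ℕ) = 0 ∧ (j : ℕ) = 0
    | _, _ => False)

namespace TprimeAux

variable {k a b : ℕ}

lemma nbhd_x_leaf (hk : 1 ≤ k) (i : Fin k) (hi : (i:ℕ) ≠ 0) :
    (Tprime k a b).neighborSet (Sum.inl i) = {Sum.inl ⟨0, hk⟩} := by
  ext w
  rcases w with j | j | j <;>
    simp [Tprime, SimpleGraph.fromRel_adj, hi, Fin.ext_iff] <;> omega

lemma nbhd_u_leaf (ha : 1 ≤ a) (i : Fin a) (hi : (i:ℕ) ≠ 0) :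
    (Tprime k a b).neighborSet (Sum.inr (Sum.inl i)) = {Sum.inr (Sum.inl ⟨0, ha⟩)} := by
  ext w
  rcases w with j | j | j <;>
    simp [Tprime, SimpleGraph.fromRel_adj, hi, Fin.ext_iff] <;> omega

lemma nbhd_v_leaf (hb : 1 ≤ b) (i : Fin b) (hi : (i:ℕ) ≠ 0) :
    (Tprime k a b).neighborSet (Sum.inr (Sum.inr i)) = {Sum.inr (Sum.inr ⟨0, hb⟩)} := by
  ext w
  rcases w with j | j | j <;>
    simp [Tprime, SimpleGraph.fromRel_adj, hi, Fin.ext_iff] <;> omega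

lemma adj_x_leaf (hk : 1 ≤ k) (i : Fin k) (hi : (i:ℕ) ≠ 0) :
    (Tprime k a b).Adj (Sum.inl ⟨0, hk⟩) (Sum.inl i) := by
  simp [Tprime, SimpleGraph.fromRel_adj, hi, Fin.ext_iff]; omega

lemma adj_x_u (hk : 1 ≤ k) (ha : 1 ≤ a) :
    (Tprime k a b).Adj (Sum.inl ⟨0, hk⟩) (Sum.inr (Sum.inl ⟨0, ha⟩)) := by
  simp [Tprime, SimpleGraph.fromRel_adj]

lemma adj_x_v (hk : 1 ≤ k) (hb : 1 ≤ b) :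
    (Tprime k a b).Adj (Sum.inl ⟨0, hk⟩) (Sum.inr (Sum.inr ⟨0, hb⟩)) := by
  simp [Tprime, SimpleGraph.fromRel_adj]

lemma adj_u_leaf (ha : 1 ≤ a) (i : Fin a) (hi : (i:ℕ) ≠ 0) :
    (Tprime k a b).Adj (Sum.inr (Sum.inl ⟨0, ha⟩)) (Sum.inr (Sum.inl i)) := by
  simp [Tprime, SimpleGraph.fromRel_adj, hi, Fin.ext_iff]; omega

lemma adj_v_leaf (hb : 1 ≤ b) (i : Fin b) (hi : (i:ℕ) ≠ 0) :
    (Tprime k a b).Adj (Sum.inr (Sum.inr ⟨0, hb⟩)) (Sum.inr (Sum.inr i)) := by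
  simp [Tprime, SimpleGraph.fromRel_adj, hi, Fin.ext_iff]; omega

/-- side of a vertex : true iff in the a-star -/
def side : (Fin k ⊕ Fin a ⊕ Fin b) → Bool
  | Sum.inr (Sum.inl _) => true
  | _ => false

lemma side_const {S : Set (Fin k ⊕ Fin a ⊕ Fin b)} (hS : ∀ i : Fin k, Sum.inl i ∉ S)
    {p q : S} (h : ((Tprime k a b).induce S).Reachable p q) : side p.1 = side q.1 := by
  obtain ⟨w⟩ := h
  induction w with
  | nil => rfl
  | cons h' w' ih =>
    rename_i p r q
    refine Eq.trans ?_ ih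
    have hadj : (Tprime k a b).Adj p.1 r.1 := h'
    obtain ⟨p, hp⟩ := p
    obtain ⟨r, hr⟩ := r
    rcases p with i | i | i
    · exact absurd hp (hS i)
    all_goals rcases r with j | j | j
    · exact absurd hr (hS j)
    · rfl
    · exact absurd hadj (by simp [Tprime, SimpleGraph.fromRel_adj])
    · exact absurd hr (hS j)
    · exact absurd hadj (by simp [Tprime, SimpleGraph.fromRel_adj])
    · rfl

/-- the canonical cut: all vertices of the x-star -/
def cutF (k a b : ℕ) : Finset (Fin k ⊕ Fin a ⊕ Fin b) :=
  Finset.univ.image Sum.inl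

lemma cutF_card : (cutF k a b).card = k := by
  rw [cutF, Finset.card_image_of_injective _ Sum.inl_injective]
  simp

lemma cutF_isGNCut (hk : 1 ≤ k) (ha : 2 ≤ a) (hb : 2 ≤ b) :
    IsGNCut (Tprime k a b) 1 (cutF k a b) := by
  have ha1 : 1 ≤ a := by omega
  have hb1 : 1 ≤ b := by omega
  constructor
  · intro hpre
    have hu : (Sum.inr (Sum.inl ⟨0, ha1⟩) : Fin k ⊕ Fin a ⊕ Fin b) ∈ ((cutF k a b : Set _))ᶜ := by
      simp [cutF]
    have hv : (Sum.inr (Sum.inr ⟨0, hb1⟩) : Fin k ⊕ Fin a ⊕ Fin b) ∈ ((cutF k a b : Set _))ᶜ := by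
      simp [cutF]
    have := side_const (k := k) (a := a) (b := b)
      (S := ((cutF k a b : Set _))ᶜ) (by intro i; simp [cutF])
      (p := ⟨_, hu⟩) (q := ⟨_, hv⟩) (hpre _ _)
    simp [side] at this
  · intro w hw
    rcases w with i | i | i
    · exact absurd (by simp [cutF] : Sum.inl i ∈ cutF k a b) hw
    · refine le_trans ?_ (le_refl _)
      rw [Nat.one_le_iff_ne_zero, ← Nat.pos_iff_ne_zero, Set.ncard_pos (Set.toFinite _)]
      by_cases hi : (i:ℕ) = 0
      · refine ⟨Sum.inr (Sum.inl ⟨1, ha⟩), ?_, ?_⟩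
        · have : i = ⟨0, ha1⟩ := Fin.ext hi
          rw [this]
          exact adj_u_leaf ha1 ⟨1, ha⟩ (by simp)
        · simp [cutF]
      · exact ⟨Sum.inr (Sum.inl ⟨0, ha1⟩), (adj_u_leaf ha1 i hi).symm, by simp [cutF]⟩
    · refine le_trans ?_ (le_refl _)
      rw [Nat.one_le_iff_ne_zero, ← Nat.pos_iff_ne_zero, Set.ncard_pos (Set.toFinite _)]
      by_cases hi : (i:ℕ) = 0
      · refine ⟨Sum.inr (Sum.inr ⟨1, hb⟩), ?_, ?_⟩
        · have : i = ⟨0, hb1⟩ := Fin.ext hi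
          rw [this]
          exact adj_v_leaf hb1 ⟨1, hb⟩ (by simp)
        · simp [cutF]
      · exact ⟨Sum.inr (Sum.inr ⟨0, hb1⟩), (adj_v_leaf hb1 i hi).symm, by simp [cutF]⟩

lemma lower (hk : 1 ≤ k) (ha : 1 ≤ a) (hb : 1 ≤ b)
    {F : Finset (Fin k ⊕ Fin a ⊕ Fin b)} (hF : IsGNCut (Tprime k a b) 1 F) :
    k ≤ F.card := by
  by_contra hcard
  push_neg at hcard
  set x : Fin k ⊕ Fin a ⊕ Fin b := Sum.inl ⟨0, hk⟩ with hxdef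
  -- x ∉ F
  have hx : x ∉ F := by
    intro hxF
    have hall : ∀ i : Fin k, Sum.inl i ∈ F := by
      intro i
      by_cases hi : (i:ℕ) = 0
      · have : i = ⟨0, hk⟩ := Fin.ext hi
        rw [this]; exact hxF
      · by_contra hiF
        have h1 := hF.2 _ hiF
        rw [nbhd_x_leaf hk i hi] at h1
        have : ({x} : Set (Fin k ⊕ Fin a ⊕ Fin b)) \ ↑F = ∅ := by
          simp [Set.diff_eq_empty, hxF]
        rw [this] at h1
        simp at h1
    have hsub : (Finset.univ.image (Sum.inl : Fin k → Fin k ⊕ Fin a ⊕ Fin b)) ⊆ F := by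
      intro w hw
      simp only [Finset.mem_image, Finset.mem_univ, true_and] at hw
      obtain ⟨i, rfl⟩ := hw
      exact hall i
    have := Finset.card_le_card hsub
    rw [Finset.card_image_of_injective _ Sum.inl_injective] at this
    simp at this
    omega
  set S : Set (Fin k ⊕ Fin a ⊕ Fin b) := (↑F)ᶜ with hSdef
  have hxS : x ∈ S := hx
  -- every vertex of S reaches x
  have key : ∀ w : S, ((Tprime k a b).induce S).Reachable w ⟨x, hxS⟩ := by
    rintro ⟨w, hw⟩
    have hwF : w ∉ F := hw
    rcases w with i | i | i
    · by_cases hi : (i:ℕ) = 0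
      · have : i = ⟨0, hk⟩ := Fin.ext hi
        subst this
        exact Reachable.refl _
      · exact Adj.reachable ((adj_x_leaf hk i hi).symm :
          (Tprime k a b).Adj (Sum.inl i) x)
    · by_cases hi : (i:ℕ) = 0
      · have : i = ⟨0, ha⟩ := Fin.ext hi
        subst this
        exact Adj.reachable ((adj_x_u hk ha).symm :
          (Tprime k a b).Adj (Sum.inr (Sum.inl ⟨0, ha⟩)) x)
      · -- leaf of u : u ∉ F
        have h1 := hF.2 _ hwF
        rw [nbhd_u_leaf ha i hi] at h1
        have hune : ({Sum.inr (Sum.inl ⟨0, ha⟩)} \ (↑F : Set (Fin k ⊕ Fin a ⊕ Fin b))).Nonempty := by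
          rw [← Set.ncard_pos (Set.toFinite _)]; omega
        obtain ⟨z, hz1, hz2⟩ := hune
        rw [Set.mem_singleton_iff] at hz1
        subst hz1
        have huS : (Sum.inr (Sum.inl ⟨0, ha⟩) : Fin k ⊕ Fin a ⊕ Fin b) ∈ S := hz2
        refine Reachable.trans (v := (⟨Sum.inr (Sum.inl ⟨0, ha⟩), huS⟩ : S))
          (Adj.reachable ?_) (Adj.reachable ?_)
        · exact ((adj_u_leaf ha i hi).symm :
            (Tprime k a b).Adj (Sum.inr (Sum.inl i)) (Sum.inr (Sum.inl ⟨0, ha⟩)))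
        · exact ((adj_x_u hk ha).symm :
            (Tprime k a b).Adj (Sum.inr (Sum.inl ⟨0, ha⟩)) x)
    · by_cases hi : (i:ℕ) = 0
      · have : i = ⟨0, hb⟩ := Fin.ext hi
        subst this
        exact Adj.reachable ((adj_x_v hk hb).symm :
          (Tprime k a b).Adj (Sum.inr (Sum.inr ⟨0, hb⟩)) x)
      · have h1 := hF.2 _ hwF
        rw [nbhd_v_leaf hb i hi] at h1
        have hune : ({Sum.inr (Sum.inr ⟨0, hb⟩)} \ (↑F : Set (Fin k ⊕ Fin a ⊕ Fin b))).Nonempty := by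
          rw [← Set.ncard_pos (Set.toFinite _)]; omega
        obtain ⟨z, hz1, hz2⟩ := hune
        rw [Set.mem_singleton_iff] at hz1
        subst hz1
        have hvS : (Sum.inr (Sum.inr ⟨0, hb⟩) : Fin k ⊕ Fin a ⊕ Fin b) ∈ S := hz2
        refine Reachable.trans (v := (⟨Sum.inr (Sum.inr ⟨0, hb⟩), hvS⟩ : S))
          (Adj.reachable ?_) (Adj.reachable ?_)
        · exact ((adj_v_leaf hb i hi).symm :
            (Tprime k a b).Adj (Sum.inr (Sum.inr i)) (Sum.inr (Sum.inr ⟨0, hb⟩)))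
        · exact ((adj_x_v hk hb).symm :
            (Tprime k a b).Adj (Sum.inr (Sum.inr ⟨0, hb⟩)) x)
    all_goals skip
  exact hF.1 (fun p q => (key p).trans (key q).symm)

end TprimeAux

/-- If a, b ≥ 2, k + a + b = n and n ≥ k + 4, then κ^1(T'_n) = k. -/
theorem stmt14 (n k a b : ℕ) (hk : 1 ≤ k) (ha : 2 ≤ a) (hb : 2 ≤ b)
    (hsum : k + a + b = n) (hn : k + 4 ≤ n) :
    gnConn (Tprime k a b) 1 = k := by
  have hmem : k ∈ {m | ∃ F : Finset (Fin k ⊕ Fin a ⊕ Fin b),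
      IsGNCut (Tprime k a b) 1 F ∧ F.card = m} :=
    ⟨TprimeAux.cutF k a b, TprimeAux.cutF_isGNCut hk ha hb, TprimeAux.cutF_card⟩
  refine le_antisymm (Nat.sInf_le hmem) ?_
  have hne : {m | ∃ F : Finset (Fin k ⊕ Fin a ⊕ Fin b),
      IsGNCut (Tprime k a b) 1 F ∧ F.card = m}.Nonempty := ⟨k, hmem⟩
  obtain ⟨F, hF, hFc⟩ := Nat.sInf_mem hne
  rw [gnConn, ← hFc]
  exact TprimeAux.lower hk (by omega) (by omega) hF
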